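/- Let f, g : [0,1] → [0,∞) be continuous functions that are both strictly decreasing, let s > 1, and let μ be Lebesgue measure on ℝ. Then (Sugeno ∫₀¹ f^s dμ) · (Sugeno ∫₀¹ g^s dμ) ≤ Sugeno ∫₀¹ (f·g)^s dμ. -/

import Mathlib

open MeasureTheory Set

/-- Sugeno integral of `f` over `A` w.r.t. measure `μ`. -/
noncomputable def sugeno (μ : Measure ℝ) (A : Set ℝ) (f : ℝ → ℝ) : ℝ :=
  ⨆ α : {a : ℝ // 0 ≤ a}, min α.1 (μ (A ∩ {x | α.1 ≤ f x})).toReal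

namespace SugenoAux

lemma meas_le_one' (h : ℝ → ℝ) (α : ℝ) :
    volume (Icc (0:ℝ) 1 ∩ {x | α ≤ h x}) ≤ 1 := by
  calc volume (Icc (0:ℝ) 1 ∩ {x | α ≤ h x}) ≤ volume (Icc (0:ℝ) 1) :=
        measure_mono inter_subset_left
    _ = 1 := by simp [Real.volume_Icc]

lemma meas_ne_top (h : ℝ → ℝ) (α : ℝ) :
    volume (Icc (0:ℝ) 1 ∩ {x | α ≤ h x}) ≠ ⊤ :=
  ((meas_le_one' h α).trans_lt ENNReal.one_lt_top).ne

lemma meas_le_one (h : ℝ → ℝ) (α : ℝ) :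
    (volume (Icc (0:ℝ) 1 ∩ {x | α ≤ h x})).toReal ≤ 1 :=
  ENNReal.toReal_le_of_le_ofReal zero_le_one (by simpa using meas_le_one' h α)

lemma bdd (h : ℝ → ℝ) :
    BddAbove (Set.range fun α : {a : ℝ // 0 ≤ a} =>
      min α.1 (volume (Icc (0:ℝ) 1 ∩ {x | α.1 ≤ h x})).toReal) := by
  refine ⟨1, ?_⟩
  rintro x ⟨α, rfl⟩
  exact (min_le_right _ _).trans (meas_le_one h α.1)

lemma sugeno_nonneg (h : ℝ → ℝ) : 0 ≤ sugeno volume (Icc 0 1) h := by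
  have := le_ciSup (bdd h) ⟨0, le_refl 0⟩
  simpa [sugeno, min_eq_left ENNReal.toReal_nonneg] using this

lemma sugeno_le_one (h : ℝ → ℝ) : sugeno volume (Icc 0 1) h ≤ 1 :=
  ciSup_le fun α => (min_le_right _ _).trans (meas_le_one h α.1)

lemma le_sugeno (h : ℝ → ℝ) {α : ℝ} (hα : 0 ≤ α) :
    min α (volume (Icc (0:ℝ) 1 ∩ {x | α ≤ h x})).toReal ≤ sugeno volume (Icc 0 1) h :=
  le_ciSup (bdd h) ⟨α, hα⟩

lemma key (h : ℝ → ℝ) {β : ℝ} (hlt : β < sugeno volume (Icc 0 1) h) :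
    sugeno volume (Icc 0 1) h ≤ (volume (Icc (0:ℝ) 1 ∩ {x | β ≤ h x})).toReal := by
  unfold sugeno at hlt ⊢
  set S : ℝ := ⨆ α : {a : ℝ // 0 ≤ a},
    min α.1 (volume (Icc (0:ℝ) 1 ∩ {x | α.1 ≤ h x})).toReal with hS
  refine le_of_forall_pos_le_add fun ε hε => ?_
  have hε' : 0 < min ε (S - β) := lt_min hε (by linarith)
  have h2 : S - min ε (S - β) < S := by linarith
  obtain ⟨α, hα⟩ := exists_lt_of_lt_ciSup (hS ▸ h2)
  have hα1 := lt_of_lt_of_le hα (min_le_left _ _)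
  have hα2 := lt_of_lt_of_le hα (min_le_right _ _)
  have hαβ : β ≤ α.1 := by
    have h3 := min_le_right ε (S - β)
    linarith
  have hsub : Icc (0:ℝ) 1 ∩ {x | α.1 ≤ h x} ⊆ Icc (0:ℝ) 1 ∩ {x | β ≤ h x} :=
    inter_subset_inter_right _ fun x hx => le_trans hαβ hx
  have hmono : (volume (Icc (0:ℝ) 1 ∩ {x | α.1 ≤ h x})).toReal ≤
      (volume (Icc (0:ℝ) 1 ∩ {x | β ≤ h x})).toReal :=
    ENNReal.toReal_mono (meas_ne_top h β) (measure_mono hsub)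
  have h4 := min_le_left ε (S - β)
  linarith

end SugenoAux

open SugenoAux in
theorem diaz_metcalf_sugeno_decreasing (f g : ℝ → ℝ) (s : ℝ) (hs : 1 < s)
    (hf_cont : ContinuousOn f (Set.Icc 0 1)) (hg_cont : ContinuousOn g (Set.Icc 0 1))
    (hf_anti : StrictAntiOn f (Set.Icc 0 1)) (hg_anti : StrictAntiOn g (Set.Icc 0 1))
    (hf_nonneg : ∀ x ∈ Set.Icc (0 : ℝ) 1, 0 ≤ f x)
    (hg_nonneg : ∀ x ∈ Set.Icc (0 : ℝ) 1, 0 ≤ g x) :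
    sugeno volume (Set.Icc 0 1) (fun x => f x ^ s) *
      sugeno volume (Set.Icc 0 1) (fun x => g x ^ s) ≤
    sugeno volume (Set.Icc 0 1) (fun x => (f x * g x) ^ s) := by
  set S₁ := sugeno volume (Set.Icc 0 1) (fun x => f x ^ s) with hS₁
  set S₂ := sugeno volume (Set.Icc 0 1) (fun x => g x ^ s) with hS₂
  set S₃ := sugeno volume (Set.Icc 0 1) (fun x => (f x * g x) ^ s) with hS₃
  have hS₁0 : 0 ≤ S₁ := sugeno_nonneg _
  have hS₂0 : 0 ≤ S₂ := sugeno_nonneg _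
  have hS₃0 : 0 ≤ S₃ := sugeno_nonneg _
  have hS₁1 : S₁ ≤ 1 := sugeno_le_one _
  have hS₂1 : S₂ ≤ 1 := sugeno_le_one _
  rcases eq_or_lt_of_le hS₁0 with h0 | hS₁pos
  · rw [← h0, zero_mul]; exact hS₃0
  rcases eq_or_lt_of_le hS₂0 with h0 | hS₂pos
  · rw [← h0, mul_zero]; exact hS₃0
  refine le_of_forall_pos_le_add fun ε hε => ?_
  set δ : ℝ := min (ε / 2) (min S₁ S₂ / 2) with hδ
  have hδpos : 0 < δ := lt_min (by linarith) (by
    have := lt_min hS₁pos hS₂pos; linarith)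
  have hδS₁ : δ < S₁ := by
    have h1 := min_le_right (ε / 2) (min S₁ S₂ / 2)
    have h2 := min_le_left S₁ S₂
    linarith
  have hδS₂ : δ < S₂ := by
    have h1 := min_le_right (ε / 2) (min S₁ S₂ / 2)
    have h2 := min_le_right S₁ S₂
    linarith
  have hδε : δ ≤ ε / 2 := min_le_left _ _
  set β : ℝ := S₁ - δ with hβ
  set γ : ℝ := S₂ - δ with hγ
  have hβ0 : 0 ≤ β := by simp [hβ]; linarith
  have hγ0 : 0 ≤ γ := by simp [hγ]; linarith
  have hβlt : β < S₁ := by simp [hβ]; linarith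
  have hγlt : γ < S₂ := by simp [hγ]; linarith
  set A : Set ℝ := Set.Icc (0:ℝ) 1 ∩ {x | β ≤ f x ^ s} with hA
  set B : Set ℝ := Set.Icc (0:ℝ) 1 ∩ {x | γ ≤ g x ^ s} with hB
  have h1 : S₁ ≤ (volume A).toReal := key (fun x => f x ^ s) hβlt
  have h2 : S₂ ≤ (volume B).toReal := key (fun x => g x ^ s) hγlt
  have hs0 : (0:ℝ) ≤ s := by linarith
  -- the two down-sets are nested
  have hchain : A ⊆ B ∨ B ⊆ A := by
    by_contra hc
    push_neg at hc
    obtain ⟨hc1, hc2⟩ := hc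
    obtain ⟨x, hxA, hxB⟩ := not_subset.mp hc1
    obtain ⟨y, hyB, hyA⟩ := not_subset.mp hc2
    rcases le_total x y with hxy | hxy
    · refine hxB ⟨hxA.1, ?_⟩
      have hg0 : g y ≤ g x := hg_anti.antitoneOn hxA.1 hyB.1 hxy
      have : g y ^ s ≤ g x ^ s := Real.rpow_le_rpow (hg_nonneg y hyB.1) hg0 hs0
      exact le_trans hyB.2 this
    · refine hyA ⟨hyB.1, ?_⟩
      have hf0 : f x ≤ f y := hf_anti.antitoneOn hyB.1 hxA.1 hxy
      have : f x ^ s ≤ f y ^ s := Real.rpow_le_rpow (hf_nonneg x hxA.1) hf0 hs0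
      exact le_trans hxA.2 this
  have hsub3 : A ∩ B ⊆ Set.Icc (0:ℝ) 1 ∩ {x | β * γ ≤ (f x * g x) ^ s} := by
    rintro x ⟨hxA, hxB⟩
    refine ⟨hxA.1, ?_⟩
    have hfx := hf_nonneg x hxA.1
    have hgx := hg_nonneg x hxA.1
    show β * γ ≤ (f x * g x) ^ s
    rw [Real.mul_rpow hfx hgx]
    exact mul_le_mul hxA.2 hxB.2 hγ0 (Real.rpow_nonneg hfx s)
  have h4 : (volume (A ∩ B)).toReal ≤
      (volume (Set.Icc (0:ℝ) 1 ∩ {x | β * γ ≤ (f x * g x) ^ s})).toReal :=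
    ENNReal.toReal_mono (meas_ne_top (fun x => (f x * g x) ^ s) (β * γ))
      (measure_mono hsub3)
  have h5 : S₁ * S₂ ≤ (volume (A ∩ B)).toReal := by
    rcases hchain with hcab | hcba
    · rw [inter_eq_left.mpr hcab]
      calc S₁ * S₂ ≤ S₁ := mul_le_of_le_one_right hS₁0 hS₂1
        _ ≤ _ := h1
    · rw [inter_eq_right.mpr hcba]
      calc S₁ * S₂ ≤ S₂ := mul_le_of_le_one_left hS₂0 hS₁1
        _ ≤ _ := h2
  have hβγS : β * γ ≤ S₁ * S₂ := mul_le_mul hβlt.le hγlt.le hγ0 hS₁0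
  have h6 : β * γ ≤ S₃ := by
    have hmin : min (β * γ)
        (volume (Set.Icc (0:ℝ) 1 ∩ {x | β * γ ≤ (f x * g x) ^ s})).toReal = β * γ :=
      min_eq_left (le_trans hβγS (le_trans h5 h4))
    have := le_sugeno (fun x => (f x * g x) ^ s) (mul_nonneg hβ0 hγ0)
    rw [hmin] at this
    exact this
  -- finish: S₁ * S₂ ≤ β * γ + ε
  have : S₁ * S₂ ≤ β * γ + ε := by
    have hβγ : β * γ = (S₁ - δ) * (S₂ - δ) := by rw [hβ, hγ]
    nlinarith [hδpos.le, hδε, hS₁1, hS₂1]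
  linarith
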